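/- The conditional q-measure of a one-step transition equals the squared modulus of its amplitude: fix n ≥ 2, 0 ≤ k ≤ n−2, x ∈ V, and y ∈ succ x; let E_x = {ω ∈ Ω_n : ω k = x} and E_{x,y} = {ω ∈ Ω_n : ω k = x and ω (k+1) = y}. Then μ_n(E_{x,y}) = μ_n(E_x) · |a x y|². In particular, whenever μ_n(E_x) ≠ 0, the conditional q-measure μ_n(E_{x,y}) / μ_n(E_x) equals |a x y|². (This is the identity μ_n(y | x) = |a(x→y)|² used to characterize discrete geodesics for an amplitude process.) -/
import Mathlib


variable {V : Type*} [Fintype V] [DecidableEq V]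

/-- An `n`-path: `ω 0 = v₀` and each entry is a successor of the previous one. -/
def IsPath (v₀ : V) (succ : V → Finset V) (n : ℕ) (ω : Fin n → V) : Prop :=
  (∀ i : Fin n, (i : ℕ) = 0 → ω i = v₀) ∧
    ∀ i j : Fin n, (j : ℕ) = (i : ℕ) + 1 → ω j ∈ succ (ω i)

instance (v₀ : V) (succ : V → Finset V) (n : ℕ) :
    DecidablePred (IsPath v₀ succ n) := fun ω => by
  unfold IsPath; infer_instance

/-- `Ω_n`, the finite set of `n`-paths. -/
def pathSet (v₀ : V) (succ : V → Finset V) (n : ℕ) : Finset (Fin n → V) :=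
  Finset.univ.filter (IsPath v₀ succ n)

/-- The amplitude `a_n(ω) = ∏_{k=0}^{n-2} a (ω k) (ω (k+1))`. -/
noncomputable def amp (a : V → V → ℂ) (n : ℕ) (ω : Fin n → V) : ℂ :=
  ∏ k : Fin (n - 1),
    a (ω ⟨k.1, by have := k.2; omega⟩) (ω ⟨k.1 + 1, by have := k.2; omega⟩)

/-- The decoherence functional `D_n(A,B) = (∑_{ω ∈ A} a_n(ω)) ⬝ conj (∑_{ω' ∈ B} a_n(ω'))`. -/
noncomputable def Dfun (a : V → V → ℂ) (n : ℕ) (A B : Finset (Fin n → V)) : ℂ :=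
  (∑ ω ∈ A, amp a n ω) * (starRingEnd ℂ) (∑ ω ∈ B, amp a n ω)

/-- The `q`-measure `μ_n(A) = |∑_{ω ∈ A} a_n(ω)|²`. -/
noncomputable def qMeas (a : V → V → ℂ) (n : ℕ) (A : Finset (Fin n → V)) : ℝ :=
  Complex.normSq (∑ ω ∈ A, amp a n ω)

/-- The one-step extension `A→ = {ω ∈ Ω_{n+1} : ω|_{Fin n} ∈ A}`. -/
def ext (v₀ : V) (succ : V → Finset V) {n : ℕ} (A : Finset (Fin n → V)) :
    Finset (Fin (n + 1) → V) :=
  (pathSet v₀ succ (n + 1)).filter (fun ω => (fun k : Fin n => ω k.castSucc) ∈ A)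

section Aux

variable (v₀ : V) (succ : V → Finset V) (a : V → V → ℂ)

omit [Fintype V] [DecidableEq V] in
lemma snoc_lt {n : ℕ} (ρ : Fin (n + 1) → V) (w : V) (i : ℕ) (h : i < n + 1)
    (h2 : i < n + 2) : (Fin.snoc ρ w : Fin (n + 2) → V) ⟨i, h2⟩ = ρ ⟨i, h⟩ := by
  have := Fin.snoc_castSucc (α := fun _ : Fin (n + 2) => V) (p := ρ) (x := w) (i := ⟨i, h⟩)
  rwa [show (⟨i, h⟩ : Fin (n + 1)).castSucc = (⟨i, h2⟩ : Fin (n + 2)) from Fin.ext rfl] at this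

omit [Fintype V] [DecidableEq V] in
lemma snoc_top {n : ℕ} (ρ : Fin (n + 1) → V) (w : V)
    (h2 : n + 1 < n + 2) : (Fin.snoc ρ w : Fin (n + 2) → V) ⟨n + 1, h2⟩ = w := by
  have := Fin.snoc_last (α := fun _ : Fin (n + 2) => V) (p := ρ) (x := w)
  rwa [show Fin.last (n + 1) = (⟨n + 1, h2⟩ : Fin (n + 2)) from Fin.ext rfl] at this

lemma mem_pathSet' {n : ℕ} {ω : Fin n → V} :
    ω ∈ pathSet v₀ succ n ↔ IsPath v₀ succ n ω := by
  simp [pathSet]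

omit [Fintype V] [DecidableEq V] in
lemma isPath_init' {n : ℕ} {ω : Fin (n + 1) → V} (h : IsPath v₀ succ (n + 1) ω) :
    IsPath v₀ succ n (Fin.init ω) := by
  obtain ⟨h0, hs⟩ := h
  refine ⟨fun i hi => h0 i.castSucc (by simpa using hi),
    fun i j hj => hs i.castSucc j.castSucc (by simpa using hj)⟩

omit [Fintype V] [DecidableEq V] in
lemma isPath_snoc' {n : ℕ} {ρ : Fin (n + 1) → V} {w : V} (h : IsPath v₀ succ (n + 1) ρ)
    (hw : w ∈ succ (ρ (Fin.last n))) : IsPath v₀ succ (n + 2) (Fin.snoc ρ w) := by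
  obtain ⟨h0, hs⟩ := h
  constructor
  · intro i hi
    have hi' : i = (⟨0, by omega⟩ : Fin (n + 2)) := by apply Fin.ext; simpa using hi
    rw [hi', snoc_lt ρ w 0 (by omega)]
    exact h0 _ rfl
  · intro i j hj
    have hieq : i = (⟨(i : ℕ), i.2⟩ : Fin (n + 2)) := rfl
    have hjeq : j = (⟨(j : ℕ), j.2⟩ : Fin (n + 2)) := rfl
    rw [hieq, hjeq]
    by_cases hjlt : (j : ℕ) < n + 1
    · rw [snoc_lt ρ w _ hjlt, snoc_lt ρ w _ (by omega)]
      exact hs ⟨(i : ℕ), by omega⟩ ⟨(j : ℕ), hjlt⟩ hj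
    · have hjv : (j : ℕ) = n + 1 := by have := j.2; omega
      have hiv : (i : ℕ) = n := by omega
      rw [show (⟨(j : ℕ), j.2⟩ : Fin (n + 2)) = ⟨n + 1, by omega⟩ from Fin.ext hjv,
        show (⟨(i : ℕ), i.2⟩ : Fin (n + 2)) = ⟨n, by omega⟩ from Fin.ext hiv,
        snoc_top, snoc_lt ρ w n (by omega)]
      exact hw

omit [Fintype V] [DecidableEq V] in
lemma amp_eq (n : ℕ) (ω : Fin (n + 1) → V) :
    amp a (n + 1) ω = ∏ k : Fin n,
      a (ω ⟨k.1, by omega⟩) (ω ⟨k.1 + 1, by omega⟩) := rfl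

omit [Fintype V] [DecidableEq V] in
lemma amp_snoc (m : ℕ) (ρ : Fin (m + 1) → V) (w : V) :
    amp a (m + 2) (Fin.snoc ρ w) = amp a (m + 1) ρ * a (ρ (Fin.last m)) w := by
  rw [amp_eq, amp_eq, Fin.prod_univ_castSucc]
  congr 1
  · refine Finset.prod_congr rfl fun j _ => ?_
    have e1 : ((Fin.castSucc j : Fin (m + 1)) : ℕ) = (j : ℕ) := rfl
    rw [show (⟨((Fin.castSucc j : Fin (m + 1)) : ℕ), by omega⟩ : Fin (m + 2)) =
        ⟨(j : ℕ), by omega⟩ from Fin.ext rfl,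
      show (⟨((Fin.castSucc j : Fin (m + 1)) : ℕ) + 1, by omega⟩ : Fin (m + 2)) =
        ⟨(j : ℕ) + 1, by omega⟩ from Fin.ext rfl,
      snoc_lt ρ w _ (by omega), snoc_lt ρ w _ (by have := j.2; omega)]
  · have e2 : ((Fin.last m : Fin (m + 1)) : ℕ) = m := rfl
    rw [show (⟨((Fin.last m : Fin (m + 1)) : ℕ) + 1, by omega⟩ : Fin (m + 2)) =
        ⟨m + 1, by omega⟩ from Fin.ext rfl,
      show (⟨((Fin.last m : Fin (m + 1)) : ℕ), by omega⟩ : Fin (m + 2)) =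
        ⟨m, by omega⟩ from Fin.ext rfl,
      snoc_top, snoc_lt ρ w m (by omega)]
    rfl

lemma sum_snoc (m : ℕ) (f : (Fin (m + 2) → V) → ℂ) :
    ∑ ω ∈ pathSet v₀ succ (m + 2), f ω =
      ∑ ρ ∈ pathSet v₀ succ (m + 1), ∑ w ∈ succ (ρ (Fin.last m)), f (Fin.snoc ρ w) := by
  rw [Finset.sum_sigma']
  refine (Finset.sum_nbij' (i := fun (p : Σ _ : Fin (m + 1) → V, V) => Fin.snoc p.1 p.2)
    (j := fun ω => ⟨Fin.init ω, ω (Fin.last (m + 1))⟩) ?_ ?_ ?_ ?_ ?_).symm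
  · intro p hp
    rw [Finset.mem_sigma] at hp
    exact (mem_pathSet' _ _).2 (isPath_snoc' _ _ ((mem_pathSet' _ _).1 hp.1) hp.2)
  · intro ω hω
    rw [mem_pathSet'] at hω
    refine Finset.mem_sigma.2 ⟨(mem_pathSet' _ _).2 (isPath_init' _ _ hω), ?_⟩
    show ω (Fin.last (m + 1)) ∈ succ (ω ((Fin.last m).castSucc))
    exact hω.2 _ _ (by simp)
  · intro p _
    obtain ⟨ρ, w⟩ := p
    simp
  · intro ω _
    exact Fin.snoc_init_self ω
  · intro p _
    rfl

lemma step_sum (ha : ∀ x : V, ∑ y ∈ succ x, a x y = 1) (m : ℕ)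
    (P : (Fin (m + 1) → V) → Prop) [DecidablePred P] :
    ∑ ω ∈ pathSet v₀ succ (m + 2), (if P (Fin.init ω) then amp a (m + 2) ω else 0) =
      ∑ ρ ∈ pathSet v₀ succ (m + 1), (if P ρ then amp a (m + 1) ρ else 0) := by
  rw [sum_snoc]
  refine Finset.sum_congr rfl fun ρ _ => ?_
  simp only [Fin.init_snoc, amp_snoc]
  split_ifs with h
  · rw [← Finset.mul_sum, ha, mul_one]
  · simp

end Aux

section Main

variable (v₀ : V) (succ : V → Finset V) (a : V → V → ℂ)

lemma sumA (ha : ∀ x : V, ∑ y ∈ succ x, a x y = 1) :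
    ∀ (m k : ℕ) (hm : k < m + 1) (x : V),
      ∑ ω ∈ pathSet v₀ succ (m + 1),
          (if ω ⟨k, hm⟩ = x then amp a (m + 1) ω else 0) =
        ∑ ρ ∈ pathSet v₀ succ (k + 1),
          (if ρ ⟨k, Nat.lt_succ_self k⟩ = x then amp a (k + 1) ρ else 0) := by
  intro m
  induction m with
  | zero =>
    intro k hm x
    have hk0 : k = 0 := by omega
    subst hk0
    rfl
  | succ m ih =>
    intro k hm x
    by_cases hkm : k = m + 1
    · subst hkm
      rfl
    · have hk : k < m + 1 := by omega
      have h1 := step_sum v₀ succ a ha m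
        (P := fun ρ : Fin (m + 1) → V => ρ ⟨k, hk⟩ = x)
      have h2 := ih k hk x
      exact h1.trans h2

lemma sumB (ha : ∀ x : V, ∑ y ∈ succ x, a x y = 1) :
    ∀ (m k : ℕ) (hm : k + 1 < m + 1) (x y : V),
      ∑ ω ∈ pathSet v₀ succ (m + 1),
          (if ω ⟨k, by omega⟩ = x ∧ ω ⟨k + 1, hm⟩ = y then amp a (m + 1) ω else 0) =
        ∑ ρ ∈ pathSet v₀ succ (k + 2),
          (if ρ ⟨k, by omega⟩ = x ∧ ρ ⟨k + 1, Nat.lt_succ_self _⟩ = y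
            then amp a (k + 2) ρ else 0) := by
  intro m
  induction m with
  | zero =>
    intro k hm
    omega
  | succ m ih =>
    intro k hm x y
    by_cases hkm : k + 1 = m + 1
    · have : k = m := by omega
      subst this
      rfl
    · have hk : k + 1 < m + 1 := by omega
      have h1 := step_sum v₀ succ a ha m
        (P := fun ρ : Fin (m + 1) → V => ρ ⟨k, by omega⟩ = x ∧ ρ ⟨k + 1, hk⟩ = y)
      have h2 := ih k hk x y
      exact h1.trans h2

lemma sumC (ha : ∀ x : V, ∑ y ∈ succ x, a x y = 1) (k : ℕ) (x y : V) (hy : y ∈ succ x) :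
    ∑ ρ ∈ pathSet v₀ succ (k + 2),
        (if ρ ⟨k, by omega⟩ = x ∧ ρ ⟨k + 1, Nat.lt_succ_self _⟩ = y
          then amp a (k + 2) ρ else 0) =
      (∑ ρ ∈ pathSet v₀ succ (k + 1),
        (if ρ ⟨k, Nat.lt_succ_self k⟩ = x then amp a (k + 1) ρ else 0)) * a x y := by
  rw [sum_snoc, Finset.sum_mul]
  refine Finset.sum_congr rfl fun ρ _ => ?_
  have hlast : ρ (Fin.last k) = ρ ⟨k, Nat.lt_succ_self k⟩ := rfl
  by_cases hρ : ρ ⟨k, Nat.lt_succ_self k⟩ = x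
  · have : ∀ w ∈ succ (ρ (Fin.last k)),
        (if (Fin.snoc ρ w : Fin (k + 2) → V) ⟨k, by omega⟩ = x ∧
            (Fin.snoc ρ w : Fin (k + 2) → V) ⟨k + 1, Nat.lt_succ_self _⟩ = y
          then amp a (k + 2) (Fin.snoc ρ w) else 0) =
        (if w = y then amp a (k + 1) ρ * a x w else 0) := by
      intro w _
      rw [snoc_lt ρ w k (by omega), snoc_top, amp_snoc, hlast, hρ]
      simp [hρ]
    rw [Finset.sum_congr rfl this, Finset.sum_ite_eq' (succ (ρ (Fin.last k))) y
      (fun w => amp a (k + 1) ρ * a x w)]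
    rw [hlast, hρ, if_pos hy]
    simp [hρ]
  · have : ∀ w ∈ succ (ρ (Fin.last k)),
        (if (Fin.snoc ρ w : Fin (k + 2) → V) ⟨k, by omega⟩ = x ∧
            (Fin.snoc ρ w : Fin (k + 2) → V) ⟨k + 1, Nat.lt_succ_self _⟩ = y
          then amp a (k + 2) (Fin.snoc ρ w) else 0) = 0 := by
      intro w _
      rw [snoc_lt ρ w k (by omega)]
      simp [hρ]
    rw [Finset.sum_congr rfl this]
    simp [hρ]

end Main

/-- The conditional `q`-measure of a one-step transition equals the squared
modulus of its amplitude: `μ_n(E_{x,y}) = μ_n(E_x) ⬝ |a x y|²`, and hence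
`μ_n(y | x) = |a(x→y)|²` whenever `μ_n(E_x) ≠ 0`. -/
theorem stmt13 (v₀ : V) (succ : V → Finset V) (a : V → V → ℂ)
    (ha : ∀ x : V, ∑ y ∈ succ x, a x y = 1)
    (n k : ℕ) (hn : 2 ≤ n) (hk : k ≤ n - 2) (x y : V) (hy : y ∈ succ x) :
    qMeas a n ((pathSet v₀ succ n).filter
        (fun ω => ω ⟨k, by omega⟩ = x ∧ ω ⟨k + 1, by omega⟩ = y)) =
      qMeas a n ((pathSet v₀ succ n).filter (fun ω => ω ⟨k, by omega⟩ = x)) *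
        Complex.normSq (a x y) ∧
    (qMeas a n ((pathSet v₀ succ n).filter (fun ω => ω ⟨k, by omega⟩ = x)) ≠ 0 →
      qMeas a n ((pathSet v₀ succ n).filter
          (fun ω => ω ⟨k, by omega⟩ = x ∧ ω ⟨k + 1, by omega⟩ = y)) /
        qMeas a n ((pathSet v₀ succ n).filter (fun ω => ω ⟨k, by omega⟩ = x)) =
          Complex.normSq (a x y)) := by
  obtain ⟨m, rfl⟩ : ∃ m, n = m + 1 := ⟨n - 1, by omega⟩
  have hSx : (∑ ω ∈ (pathSet v₀ succ (m + 1)).filter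
      (fun ω => ω ⟨k, by omega⟩ = x), amp a (m + 1) ω) =
      ∑ ρ ∈ pathSet v₀ succ (k + 1),
        (if ρ ⟨k, Nat.lt_succ_self k⟩ = x then amp a (k + 1) ρ else 0) := by
    rw [Finset.sum_filter]
    exact sumA v₀ succ a ha m k (by omega) x
  have hSxy : (∑ ω ∈ (pathSet v₀ succ (m + 1)).filter
      (fun ω => ω ⟨k, by omega⟩ = x ∧ ω ⟨k + 1, by omega⟩ = y), amp a (m + 1) ω) =
      (∑ ρ ∈ pathSet v₀ succ (k + 1),
        (if ρ ⟨k, Nat.lt_succ_self k⟩ = x then amp a (k + 1) ρ else 0)) * a x y := by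
    rw [Finset.sum_filter]
    rw [sumB v₀ succ a ha m k (by omega) x y]
    exact sumC v₀ succ a ha k x y hy
  have key : qMeas a (m + 1) ((pathSet v₀ succ (m + 1)).filter
      (fun ω => ω ⟨k, by omega⟩ = x ∧ ω ⟨k + 1, by omega⟩ = y)) =
      qMeas a (m + 1) ((pathSet v₀ succ (m + 1)).filter
        (fun ω => ω ⟨k, by omega⟩ = x)) * Complex.normSq (a x y) := by
    unfold qMeas
    rw [hSx, hSxy, Complex.normSq_mul]
  refine ⟨key, fun hne => ?_⟩
  rw [key, mul_comm, mul_div_assoc, div_self hne, mul_one]
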